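/- Let k̃ = min{ k ∈ ℕ : s_k(a) > c - 1 }. Then t_{k̃}(a,b,c) belongs to the additive submonoid generated by { t_0(a,b,c), …, t_{k̃-1}(a,b,c) }, and consequently { t_0, …, t_{k̃-1} } is a minimal generating set of G_{a,b}(c). -/

import Mathlib

/-- `sF a k = Σ_{i=0}^{k-1} a^i` (so `sF a 0 = 0`). -/
def sF (a k : ℕ) : ℕ := ∑ i ∈ Finset.range k, a ^ i

/-- `tF a b c k = a^k * c + b * sF a k`. -/
def tF (a b c k : ℕ) : ℕ := a ^ k * c + b * sF a k

/-- A θ_{a,b}-semigroup: contains 0, closed under addition, and closed under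
`x ↦ a*x + b` on nonzero elements. -/
def IsThetaSG (a b : ℕ) (S : Set ℕ) : Prop :=
  0 ∈ S ∧ (∀ x ∈ S, ∀ y ∈ S, x + y ∈ S) ∧ ∀ y ∈ S, y ≠ 0 → a * y + b ∈ S

/-- `Gset a b c` : the smallest θ_{a,b}-semigroup containing `c`. -/
def Gset (a b c : ℕ) : Set ℕ := ⋂₀ {S : Set ℕ | IsThetaSG a b S ∧ c ∈ S}

/-- `Hmon a b c` : additive submonoid generated by the `tF a b c k`. -/
def Hmon (a b c : ℕ) : AddSubmonoid ℕ :=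
  AddSubmonoid.closure {x | ∃ k, x = tF a b c k}

/-- `{j_i}_{i=1}^k` is `a`-reduced. -/
def AReduced (a k : ℕ) (j : ℕ → ℕ) : Prop :=
  (∀ i, 1 ≤ i → i ≤ k → j i ≤ a) ∧ j k ≠ 0 ∧
  ∀ m, 1 ≤ m → m ≤ k → j m = a → ∀ i, 1 ≤ i → i < m → j i = 0

lemma sF_succ' (a k : ℕ) : sF a (k + 1) = sF a k + a ^ k := by
  simp [sF, Finset.sum_range_succ]

lemma sF_succ (a k : ℕ) : sF a (k + 1) = a * sF a k + 1 := by
  rw [sF, Finset.sum_range_succ', sF, Finset.mul_sum]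
  simp [pow_succ, mul_comm]

/-- `a^k + sF a k = a * sF a k + 1` -/
lemma pow_sF (a k : ℕ) : a ^ k + sF a k = a * sF a k + 1 := by
  have h1 := sF_succ' a k
  have h2 := sF_succ a k
  omega

lemma tF_succ (a b c k : ℕ) : tF a b c (k + 1) = a * tF a b c k + b := by
  simp only [tF, sF_succ, pow_succ]
  ring

lemma tF_zero (a b c : ℕ) : tF a b c 0 = c := by simp [tF, sF]

lemma tF_one (a b c : ℕ) : tF a b c 1 = a * c + b := by
  simp [tF, sF]

lemma sF_le_self (a k : ℕ) (ha : 0 < a) : k ≤ sF a k := by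
  induction k with
  | zero => simp [sF]
  | succ n ih =>
    have : 0 < a ^ n := pow_pos ha n
    rw [sF_succ']
    omega

lemma tF_ge_c (a b c k : ℕ) (ha : 0 < a) : c ≤ tF a b c k := by
  have h1 : 0 < a ^ k := pow_pos ha k
  have : c ≤ a ^ k * c := Nat.le_mul_of_pos_left c h1
  simp only [tF]
  omega

/-- key identity: `tF j + c * sF j = (a*c+b) * sF j + c`. -/
lemma tF_key (a b c k : ℕ) :
    tF a b c k + c * sF a k = (a * c + b) * sF a k + c := by
  have h : (a ^ k + sF a k) * c = (a * sF a k + 1) * c := by rw [pow_sF]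
  simp only [tF]
  ring_nf at h ⊢
  omega

theorem stmt8 (a b c : ℕ) (ha : 0 < a) (hb : 0 < b) (hc : 2 ≤ c)
    (hcop : Nat.gcd b c = 1) (kt : ℕ) (hkt : kt = sInf {k : ℕ | c - 1 < sF a k}) :
    tF a b c kt ∈ AddSubmonoid.closure {x | ∃ i < kt, x = tF a b c i} ∧
    (AddSubmonoid.closure {x | ∃ i < kt, x = tF a b c i} : Set ℕ) = Gset a b c ∧
    ∀ T ⊂ {x | ∃ i < kt, x = tF a b c i},
      (AddSubmonoid.closure T : Set ℕ) ≠ Gset a b c := by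
  set gens : Set ℕ := {x | ∃ i < kt, x = tF a b c i} with hgens
  set H : AddSubmonoid ℕ := AddSubmonoid.closure gens with hH
  -- basic facts about kt
  have hne : {k : ℕ | c - 1 < sF a k}.Nonempty := by
    refine ⟨c, ?_⟩
    have := sF_le_self a c ha
    simp only [Set.mem_setOf_eq]
    omega
  have hktmem : c - 1 < sF a kt := by
    rw [hkt]; exact Nat.sInf_mem hne
  have hlt : ∀ i < kt, sF a i ≤ c - 1 := by
    intro i hi
    have : i ∉ {k : ℕ | c - 1 < sF a k} :=
      Nat.notMem_of_lt_sInf (by rw [← hkt]; exact hi)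
    simpa using this
  have hkt2 : 2 ≤ kt := by
    rcases Nat.lt_or_ge kt 2 with h | h
    · exfalso
      have h0 : sF a kt ≤ 1 := by
        have h01 : kt = 0 ∨ kt = 1 := by omega
        rcases h01 with rfl | rfl <;> simp [sF]
      omega
    · exact h
  have hsge : c ≤ sF a kt := by omega
  -- Part 1 : tF kt ∈ H
  have h0mem : tF a b c 0 ∈ gens := ⟨0, by omega, rfl⟩
  have h1mem : tF a b c 1 ∈ gens := ⟨1, by omega, rfl⟩
  have part1 : tF a b c kt ∈ H := by
    obtain ⟨e, r, hrc, hcr⟩ : ∃ e r, r < c ∧ c * e + r = sF a kt :=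
      ⟨sF a kt / c, sF a kt % c, Nat.mod_lt _ (by omega), Nat.div_add_mod _ _⟩
    have he1 : 1 ≤ e := by
      rcases Nat.eq_zero_or_pos e with h0 | h0
      · subst h0; simp at hcr; omega
      · exact h0
    have hbound : r + e * c ≤ e * (a * c + b) + 1 := by
      rcases Nat.lt_or_ge a 2 with h2 | h2
      · -- a = 1
        have ha1 : a = 1 := by omega
        have hsF1 : ∀ k, sF a k = k := by intro k; simp [sF, ha1]
        have h1 := hlt (kt - 1) (by omega)
        rw [hsF1] at h1
        have h2' : sF a kt = kt := hsF1 kt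
        have h4 : c ≤ c * e := Nat.le_mul_of_pos_right c he1
        have hr0 : r = 0 := by omega
        have h5 : e * (a * c + b) = e * c + e * b := by rw [ha1]; ring
        have h6 : e * c = c * e := by ring
        omega
      · have h3 : 2 * c ≤ a * c := mul_le_mul_left h2 c
        have h4 : e * (2 * c) ≤ e * (a * c + b) := mul_le_mul_right (by omega) e
        have h5 : e * (2 * c) = e * c + e * c := by ring
        have h6 : c ≤ e * c := Nat.le_mul_of_pos_left c he1
        omega
    obtain ⟨l0, hl0⟩ : ∃ l0, l0 + (r + e * c) = e * (a * c + b) + 1 :=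
      ⟨e * (a * c + b) + 1 - (r + e * c), by omega⟩
    have hps := pow_sF a kt
    have hid : tF a b c kt = l0 * tF a b c 0 + r * tF a b c 1 := by
      rw [tF_zero, tF_one]
      simp only [tF]
      zify
      have hl0' : (l0 : ℤ) + ((r : ℤ) + (e : ℤ) * c) = (e : ℤ) * ((a : ℤ) * c + b) + 1 := by
        exact_mod_cast hl0
      have hcr' : (c : ℤ) * e + r = (sF a kt : ℤ) := by exact_mod_cast hcr
      have hps' : (a : ℤ) ^ kt + (sF a kt : ℤ) = (a : ℤ) * (sF a kt : ℤ) + 1 := by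
        exact_mod_cast hps
      linear_combination (-(c : ℤ)) * hl0' + ((c : ℤ) - (a : ℤ) * c - b) * hcr' + (c : ℤ) * hps'
    rw [hid]
    have m0 : tF a b c 0 ∈ H := AddSubmonoid.subset_closure h0mem
    have m1 : tF a b c 1 ∈ H := AddSubmonoid.subset_closure h1mem
    have n0 := AddSubmonoid.nsmul_mem H m0 l0
    have n1 := AddSubmonoid.nsmul_mem H m1 r
    simp only [smul_eq_mul] at n0 n1
    exact AddSubmonoid.add_mem H n0 n1
  -- H is closed under theta on nonzero elements
  have htheta : ∀ x ∈ H, x ≠ 0 → a * x + b ∈ H := by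
    intro x hx
    induction hx using AddSubmonoid.closure_induction with
    | mem y hy =>
      intro _
      obtain ⟨i, hi, rfl⟩ := hy
      rw [← tF_succ]
      rcases Nat.lt_or_ge (i + 1) kt with h | h
      · exact AddSubmonoid.subset_closure ⟨i + 1, h, rfl⟩
      · have : i + 1 = kt := by omega
        rw [this]; exact part1
    | zero => intro h; exact absurd rfl h
    | add x y hx hy ihx ihy =>
      intro hxy
      rcases Nat.eq_zero_or_pos x with h0 | h0
      · subst h0; simpa using ihy (by simpa using hxy)
      · have hax := ihx (by omega)
        have hay : a * y ∈ H := by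
          have := AddSubmonoid.nsmul_mem H hy a
          simpa [smul_eq_mul] using this
        have hsum : (a * x + b) + a * y ∈ H := AddSubmonoid.add_mem H hax hay
        have heq : a * (x + y) + b = (a * x + b) + a * y := by ring
        rwa [heq]
  have hcH : c ∈ H := by
    have := AddSubmonoid.subset_closure h0mem
    rwa [tF_zero] at this
  -- Part 2
  have part2 : (H : Set ℕ) = Gset a b c := by
    apply Set.Subset.antisymm
    · -- every tF i is in Gset
      have hGtheta : IsThetaSG a b (Gset a b c) ∧ c ∈ Gset a b c := by
        constructor
        · refine ⟨?_, ?_, ?_⟩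
          · intro S hS; exact hS.1.1
          · intro x hx y hy S hS
            exact hS.1.2.1 x (hx S hS) y (hy S hS)
          · intro y hy hy0 S hS
            exact hS.1.2.2 y (hy S hS) hy0
        · intro S hS; exact hS.2
      have htFG : ∀ i, tF a b c i ∈ Gset a b c := by
        intro i
        induction i with
        | zero => rw [tF_zero]; exact hGtheta.2
        | succ n ih =>
          rw [tF_succ]
          refine hGtheta.1.2.2 _ ih ?_
          have := tF_ge_c a b c n ha
          omega
      -- Gset is an AddSubmonoid
      let Gmon : AddSubmonoid ℕ :=
        { carrier := Gset a b c
          add_mem' := fun hx hy => hGtheta.1.2.1 _ hx _ hy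
          zero_mem' := hGtheta.1.1 }
      have hle : H ≤ Gmon := by
        apply AddSubmonoid.closure_le.mpr
        intro x hx
        obtain ⟨i, _, rfl⟩ := hx
        exact htFG i
      exact fun x hx => hle hx
    · apply Set.sInter_subset_of_mem
      refine ⟨⟨H.zero_mem, ?_, htheta⟩, hcH⟩
      intro x hx y hy
      exact AddSubmonoid.add_mem H hx hy
  -- the Q invariant on H
  have hQ : ∀ x ∈ H, x = 0 ∨ ∃ S L, 1 ≤ L ∧ x + c * S = (a * c + b) * S + c * L := by
    intro x hx
    induction hx using AddSubmonoid.closure_induction with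
    | mem y hy =>
      obtain ⟨i, _, rfl⟩ := hy
      right
      exact ⟨sF a i, 1, le_refl 1, by simpa using tF_key a b c i⟩
    | zero => left; rfl
    | add x y hx hy ihx ihy =>
      rcases ihx with rfl | ⟨S1, L1, hL1, h1⟩
      · simpa using ihy
      rcases ihy with rfl | ⟨S2, L2, hL2, h2⟩
      · right; exact ⟨S1, L1, hL1, by simpa using h1⟩
      right
      refine ⟨S1 + S2, L1 + L2, by omega, ?_⟩
      have h3 : x + y + c * (S1 + S2) = (x + c * S1) + (y + c * S2) := by ring
      rw [h3, h1, h2]; ring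
  -- key impossibility : tF i (i < kt) is not a "weight ≥ 2" combination
  have hkey : ∀ i < kt, ∀ S L, 2 ≤ L → tF a b c i + c * S = (a * c + b) * S + c * L → False := by
    intro i hi S L hL heq
    have hdc : sF a i ≤ c - 1 := hlt i hi
    have hk := tF_key a b c i
    set d := sF a i with hd
    clear_value d
    have hcomb : (a * c + b) * d + c + c * S = (a * c + b) * S + c * L + c * d := by
      omega
    rcases le_or_gt d S with hle | hlt'
    · obtain ⟨t, rfl⟩ : ∃ t, S = d + t := ⟨S - d, by omega⟩
      have hexp : (a * c + b) * (d + t) = (a * c + b) * d + a * (c * t) + b * t := by ring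
      rw [hexp] at hcomb
      have hcd : c * (d + t) = c * d + c * t := by ring
      rw [hcd] at hcomb
      have h3 : c * t ≤ a * (c * t) := Nat.le_mul_of_pos_left _ ha
      have h4 : c * 2 ≤ c * L := Nat.mul_le_mul_left c hL
      omega
    · obtain ⟨t, ht1, rfl⟩ : ∃ t, 1 ≤ t ∧ d = S + t := ⟨d - S, by omega, by omega⟩
      have hexp : (a * c + b) * (S + t) = (a * c + b) * S + a * (c * t) + b * t := by ring
      rw [hexp] at hcomb
      have hcd : c * (S + t) = c * S + c * t := by ring
      rw [hcd] at hcomb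
      have heq2 : a * (c * t) + b * t + c = c * L + c * t := by omega
      have hdvd : c ∣ b * t := by
        have h5 : c ∣ c * L + c * t := ⟨L + t, by ring⟩
        have h6 : c ∣ a * (c * t) + c := ⟨a * t + 1, by ring⟩
        have h7 : b * t = (c * L + c * t) - (a * (c * t) + c) := by omega
        rw [h7]
        exact Nat.dvd_sub h5 h6
      have hct : c ∣ t := (Nat.coprime_comm.mp hcop).dvd_of_dvd_mul_left hdvd
      have := Nat.le_of_dvd (by omega) hct
      omega
  refine ⟨part1, part2, ?_⟩
  -- Part 3 : minimality
  intro T hT hcontra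
  obtain ⟨x, hxg, hxT⟩ := Set.exists_of_ssubset hT
  obtain ⟨i, hi, rfl⟩ := hxg
  have hxG : tF a b c i ∈ Gset a b c := by
    rw [← part2]
    exact AddSubmonoid.subset_closure ⟨i, hi, rfl⟩
  have hxT' : tF a b c i ∈ AddSubmonoid.closure T := by
    have : tF a b c i ∈ (AddSubmonoid.closure T : Set ℕ) := by rw [hcontra]; exact hxG
    exact this
  -- decompose membership in closure T
  have hdec : ∀ y ∈ AddSubmonoid.closure T,
      y = 0 ∨ y ∈ T ∨ ∃ u v, u ∈ AddSubmonoid.closure T ∧ v ∈ AddSubmonoid.closure T ∧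
        u ≠ 0 ∧ v ≠ 0 ∧ y = u + v := by
    intro y hy
    induction hy using AddSubmonoid.closure_induction with
    | mem z hz => exact Or.inr (Or.inl hz)
    | zero => exact Or.inl rfl
    | add u v hu hv ihu ihv =>
      rcases Nat.eq_zero_or_pos u with h0 | h0
      · subst h0; simpa using ihv
      rcases Nat.eq_zero_or_pos v with h0' | h0'
      · subst h0'; simpa using ihu
      exact Or.inr (Or.inr ⟨u, v, hu, hv, by omega, by omega, rfl⟩)
  rcases hdec _ hxT' with h0 | hmem | ⟨u, v, hu, hv, hu0, hv0, heq⟩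
  · have := tF_ge_c a b c i ha; omega
  · exact hxT hmem
  · have hsub : AddSubmonoid.closure T ≤ H := AddSubmonoid.closure_mono hT.subset
    rcases hQ u (hsub hu) with rfl | ⟨S1, L1, hL1, h1⟩
    · exact hu0 rfl
    rcases hQ v (hsub hv) with rfl | ⟨S2, L2, hL2, h2⟩
    · exact hv0 rfl
    apply hkey i hi (S1 + S2) (L1 + L2) (by omega)
    have e : tF a b c i + c * (S1 + S2) = (u + c * S1) + (v + c * S2) := by rw [heq]; ring
    rw [e, h1, h2]; ring
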